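/- Let S = {±e_1, ±e_2, ±e_3} be the set of the six standard unit vectors and their negatives in E^3, and let K_0 = ⋃_{x ∈ S} conv({(√2)·x} ∪ B^3) be the cap body whose six base caps are the open caps of radius π/4 centered at the points of S. Then the illumination number of K_0 equals 6. -/

import Mathlib

open Metric Real Set

noncomputable section

/-- The illumination number of a convex body `K`: the least number of unit vectors
(directions) such that every boundary point `p` of `K` admits a direction `v` in the
set with `p + t • v` in the interior of `K` for some `t > 0`. -/
def illumNum (K : Set (EuclideanSpace ℝ (Fin 3))) : ℕ :=
  sInf {n : ℕ | ∃ V : Finset (EuclideanSpace ℝ (Fin 3)), V.card = n ∧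
    (∀ v ∈ V, ‖v‖ = 1) ∧
    ∀ p ∈ frontier K, ∃ v ∈ V, ∃ t : ℝ, 0 < t ∧ p + t • v ∈ interior K}

/-- The six standard unit vectors and their negatives in `E³`. -/
def stdSix : Set (EuclideanSpace ℝ (Fin 3)) :=
  {EuclideanSpace.single 0 1, -EuclideanSpace.single 0 1,
   EuclideanSpace.single 1 1, -EuclideanSpace.single 1 1,
   EuclideanSpace.single 2 1, -EuclideanSpace.single 2 1}

/-- The cap body `K₀` whose six base caps are the open caps of radius `π/4` centered
at the points `±e₁, ±e₂, ±e₃`; its vertices are the points `√2 • x`, `x ∈ S`. -/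
def K₀ : Set (EuclideanSpace ℝ (Fin 3)) :=
  ⋃ x ∈ stdSix, convexHull ℝ ({Real.sqrt 2 • x} ∪ closedBall 0 1)

/- ---------------------------------------------------------------------------
   Auxiliary material for the proof.
--------------------------------------------------------------------------- -/

abbrev E3 := EuclideanSpace ℝ (Fin 3)

local notation "⟪" x ", " y "⟫" => @inner ℝ _ _ x y

/-- The "distance profile" description of a cap `conv ({v} ∪ B)`. -/
def capD (v : E3) : Set E3 := {p : E3 | ∃ s : ℝ, 0 ≤ s ∧ s ≤ 1 ∧ ‖p - s • v‖ ≤ 1 - s}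

/-- The parametric (image) description of a cap. -/
def capT (v : E3) : Set E3 :=
  (fun q : ℝ × E3 => q.1 • v + (1 - q.1) • q.2) '' (Icc (0:ℝ) 1 ×ˢ closedBall 0 1)

lemma cap_subset_capD (v : E3) : convexHull ℝ ({v} ∪ closedBall 0 1) ⊆ capD v := by
  apply convexHull_min
  · rintro q (rfl | hq)
    · exact ⟨1, by norm_num⟩
    · exact ⟨0, le_refl _, by norm_num, by simpa using mem_closedBall_zero_iff.mp hq⟩
  · rintro p hp q hq a b ha hb hab
    obtain ⟨sp, hsp0, hsp1, hsp⟩ := hp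
    obtain ⟨sq, hsq0, hsq1, hsq⟩ := hq
    refine ⟨a * sp + b * sq, by positivity, by nlinarith, ?_⟩
    have hsplit : a • p + b • q - (a * sp + b * sq) • v
        = a • (p - sp • v) + b • (q - sq • v) := by module
    rw [hsplit]
    calc ‖a • (p - sp • v) + b • (q - sq • v)‖
        ≤ ‖a • (p - sp • v)‖ + ‖b • (q - sq • v)‖ := norm_add_le _ _
      _ = a * ‖p - sp • v‖ + b * ‖q - sq • v‖ := by
          rw [norm_smul, norm_smul, Real.norm_of_nonneg ha, Real.norm_of_nonneg hb]
      _ ≤ a * (1 - sp) + b * (1 - sq) :=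
          add_le_add (mul_le_mul_of_nonneg_left hsp ha)
            (mul_le_mul_of_nonneg_left hsq hb)
      _ = 1 - (a * sp + b * sq) := by nlinarith

lemma capD_subset_capT (v : E3) : capD v ⊆ capT v := by
  rintro p ⟨s, hs0, hs1, hs⟩
  rcases eq_or_lt_of_le hs1 with rfl | hlt
  · have hpv : p = v := by
      have h0 : ‖p - (1:ℝ) • v‖ ≤ 0 := by simpa using hs
      have := norm_le_zero_iff.mp h0
      rwa [one_smul, sub_eq_zero] at this
    exact ⟨(1, 0), by simp, by simp [hpv]⟩
  · have h1s : (0:ℝ) < 1 - s := by linarith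
    refine ⟨(s, (1 - s)⁻¹ • (p - s • v)), ⟨⟨hs0, hs1⟩, ?_⟩, ?_⟩
    · rw [mem_closedBall_zero_iff, norm_smul, Real.norm_of_nonneg (by positivity)]
      rw [inv_mul_le_iff₀ h1s, mul_one]
      exact hs
    · show s • v + (1 - s) • ((1 - s)⁻¹ • (p - s • v)) = p
      rw [smul_smul, mul_inv_cancel₀ h1s.ne', one_smul]
      abel

lemma capT_subset_cap (v : E3) : capT v ⊆ convexHull ℝ ({v} ∪ closedBall 0 1) := by
  rintro _ ⟨⟨s, b⟩, ⟨hsIcc, hb⟩, rfl⟩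
  exact (convex_convexHull ℝ ({v} ∪ closedBall 0 1))
    (subset_convexHull ℝ _ (Set.mem_union_left _ rfl))
    (subset_convexHull ℝ _ (Set.mem_union_right _ hb))
    hsIcc.1 (by linarith [hsIcc.2]) (by ring)

lemma mem_cap_iff (v p : E3) :
    p ∈ convexHull ℝ ({v} ∪ closedBall 0 1) ↔
      ∃ s : ℝ, 0 ≤ s ∧ s ≤ 1 ∧ ‖p - s • v‖ ≤ 1 - s :=
  ⟨fun h => cap_subset_capD v h,
   fun h => capT_subset_cap v (capD_subset_capT v h)⟩

lemma isClosed_cap (v : E3) : IsClosed (convexHull ℝ ({v} ∪ closedBall 0 1)) := by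
  have heq : convexHull ℝ ({v} ∪ closedBall 0 1) = capT v :=
    Subset.antisymm ((cap_subset_capD v).trans (capD_subset_capT v)) (capT_subset_cap v)
  rw [heq, capT]
  apply IsCompact.isClosed
  apply IsCompact.image (isCompact_Icc.prod (isCompact_closedBall 0 1))
  fun_prop

lemma stdSix_finite : stdSix.Finite := by
  unfold stdSix
  exact (((((Set.finite_singleton _).insert _).insert _).insert _).insert _).insert _

lemma isClosed_K₀ : IsClosed K₀ :=
  stdSix_finite.isClosed_biUnion fun x _ => isClosed_cap (Real.sqrt 2 • x)

/-- The cap body lies in the halfspace `{⟪·,u⟫ ≤ 1}` when `‖u‖ ≤ 1` and all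
vertices satisfy the constraint. -/
lemma mem_K₀_inner_le (u : E3) (hu : ‖u‖ ≤ 1)
    (hv : ∀ x ∈ stdSix, Real.sqrt 2 * ⟪x, u⟫ ≤ 1) :
    ∀ p ∈ K₀, ⟪p, u⟫ ≤ 1 := by
  intro p hp
  rw [K₀, mem_iUnion₂] at hp
  obtain ⟨x, hx, hpx⟩ := hp
  obtain ⟨s, hs0, hs1, hs⟩ := (mem_cap_iff _ _).1 hpx
  have hdecomp : p = (p - s • (Real.sqrt 2 • x)) + s • (Real.sqrt 2 • x) := by abel
  rw [hdecomp, inner_add_left, real_inner_smul_left, real_inner_smul_left]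
  have h1 : ⟪p - s • (Real.sqrt 2 • x), u⟫ ≤ 1 - s := by
    calc ⟪p - s • (Real.sqrt 2 • x), u⟫
        ≤ ‖p - s • (Real.sqrt 2 • x)‖ * ‖u‖ := real_inner_le_norm _ _
      _ ≤ (1 - s) * 1 := by
          apply mul_le_mul hs hu (norm_nonneg _)
          linarith [norm_nonneg (p - s • (Real.sqrt 2 • x))]
      _ = 1 - s := mul_one _
  have h2 : s * (Real.sqrt 2 * ⟪x, u⟫) ≤ s * 1 :=
    mul_le_mul_of_nonneg_left (hv x hx) hs0
  linarith

/-- Points with `⟪p,u⟫ ≥ 1` for a supporting `u` are not interior to `K₀`. -/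
lemma not_mem_interior_of (u p : E3) (hu : ‖u‖ ≤ 1)
    (hv : ∀ x ∈ stdSix, Real.sqrt 2 * ⟪x, u⟫ ≤ 1) (hp : 1 ≤ ⟪p, u⟫) :
    p ∉ interior K₀ := by
  intro hmem
  have hu0 : u ≠ 0 := by
    rintro rfl
    rw [inner_zero_right] at hp
    linarith
  have hupos : 0 < ‖u‖ := norm_pos_iff.2 hu0
  obtain ⟨ε, hε, hball⟩ := Metric.mem_nhds_iff.1 (mem_interior_iff_mem_nhds.1 hmem)
  have hq : p + (ε / 2) • u ∈ K₀ := by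
    apply hball
    rw [mem_ball, dist_eq_norm]
    have : p + (ε / 2) • u - p = (ε / 2) • u := by abel
    rw [this, norm_smul, Real.norm_of_nonneg (by positivity)]
    nlinarith
  have hle := mem_K₀_inner_le u hu hv _ hq
  rw [inner_add_left, real_inner_smul_left, real_inner_self_eq_norm_sq] at hle
  have hpow : 0 < ε / 2 * ‖u‖ ^ 2 := by positivity
  linarith

/-- An open-ball interior witness for `K₀`. -/
lemma mem_interior_of_ball (x : E3) (hx : x ∈ stdSix) (s : ℝ) (hs0 : 0 ≤ s)
    (hs1 : s < 1) (p : E3) (h : ‖p - s • (Real.sqrt 2 • x)‖ < 1 - s) :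
    p ∈ interior K₀ := by
  have hsub : ball (s • (Real.sqrt 2 • x)) (1 - s) ⊆ K₀ := by
    intro q hq
    rw [mem_ball, dist_eq_norm] at hq
    exact Set.mem_biUnion hx ((mem_cap_iff _ _).2 ⟨s, hs0, hs1.le, hq.le⟩)
  exact interior_maximal hsub isOpen_ball (by rw [mem_ball, dist_eq_norm]; exact h)

lemma neg_single (i : Fin 3) (a : ℝ) :
    (-(EuclideanSpace.single i a) : E3) = EuclideanSpace.single i (-a) := by
  ext j
  by_cases h : j = i <;> simp [EuclideanSpace.single_apply, h]

lemma stdSix_repr {x : E3} (hx : x ∈ stdSix) :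
    ∃ (i : Fin 3) (σ : ℝ), (σ = 1 ∨ σ = -1) ∧ x = σ • EuclideanSpace.single i 1 := by
  simp only [stdSix, Set.mem_insert_iff, Set.mem_singleton_iff] at hx
  rcases hx with rfl | rfl | rfl | rfl | rfl | rfl
  · exact ⟨0, 1, Or.inl rfl, (one_smul ℝ _).symm⟩
  · exact ⟨0, -1, Or.inr rfl, (neg_one_smul ℝ _).symm⟩
  · exact ⟨1, 1, Or.inl rfl, (one_smul ℝ _).symm⟩
  · exact ⟨1, -1, Or.inr rfl, (neg_one_smul ℝ _).symm⟩
  · exact ⟨2, 1, Or.inl rfl, (one_smul ℝ _).symm⟩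
  · exact ⟨2, -1, Or.inr rfl, (neg_one_smul ℝ _).symm⟩

lemma stdSix_norm {x : E3} (hx : x ∈ stdSix) : ‖x‖ = 1 := by
  obtain ⟨i, σ, hσ, rfl⟩ := stdSix_repr hx
  rcases hσ with rfl | rfl <;>
    simp [norm_smul, EuclideanSpace.norm_single]

lemma stdSix_neg_mem {x : E3} (hx : x ∈ stdSix) : -x ∈ stdSix := by
  simp only [stdSix, Set.mem_insert_iff, Set.mem_singleton_iff] at hx ⊢
  rcases hx with rfl | rfl | rfl | rfl | rfl | rfl <;> simp

lemma single_mem_stdSix (i : Fin 3) :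
    (EuclideanSpace.single i (1:ℝ) : E3) ∈ stdSix := by
  fin_cases i <;> simp [stdSix]

lemma exists_orth {x : E3} (hx : x ∈ stdSix) : ∃ z ∈ stdSix, ⟪x, z⟫ = 0 := by
  simp only [stdSix, Set.mem_insert_iff, Set.mem_singleton_iff] at hx
  rcases hx with rfl | rfl | rfl | rfl | rfl | rfl
  · exact ⟨EuclideanSpace.single 1 1, by simp [stdSix],
      by simp [EuclideanSpace.inner_single_left, EuclideanSpace.single_apply]⟩
  · exact ⟨EuclideanSpace.single 1 1, by simp [stdSix],
      by simp [EuclideanSpace.inner_single_left, EuclideanSpace.single_apply]⟩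
  · exact ⟨EuclideanSpace.single 2 1, by simp [stdSix],
      by simp [EuclideanSpace.inner_single_left, EuclideanSpace.single_apply]⟩
  · exact ⟨EuclideanSpace.single 2 1, by simp [stdSix],
      by simp [EuclideanSpace.inner_single_left, EuclideanSpace.single_apply]⟩
  · exact ⟨EuclideanSpace.single 0 1, by simp [stdSix],
      by simp [EuclideanSpace.inner_single_left, EuclideanSpace.single_apply]⟩
  · exact ⟨EuclideanSpace.single 0 1, by simp [stdSix],
      by simp [EuclideanSpace.inner_single_left, EuclideanSpace.single_apply]⟩

lemma stdSix_inner_cases {x y : E3} (hx : x ∈ stdSix) (hy : y ∈ stdSix) :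
    y = x ∨ y = -x ∨ ⟪y, x⟫ = 0 := by
  obtain ⟨i, σ, hσ, rfl⟩ := stdSix_repr hx
  obtain ⟨j, τ, hτ, rfl⟩ := stdSix_repr hy
  by_cases hij : i = j
  · subst hij
    rcases hσ with rfl | rfl <;> rcases hτ with rfl | rfl
    · exact Or.inl rfl
    · exact Or.inr (Or.inl (by simp))
    · exact Or.inr (Or.inl (by simp))
    · exact Or.inl rfl
  · right; right
    have hz : ((EuclideanSpace.single i (1:ℝ) : E3) j) = 0 := by
      rw [EuclideanSpace.single_apply, if_neg (Ne.symm hij)]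
    have hss : ⟪(EuclideanSpace.single j (1:ℝ) : E3),
        (EuclideanSpace.single i (1:ℝ) : E3)⟫ = 0 := by
      rw [EuclideanSpace.inner_single_left, hz, mul_zero]
    rw [real_inner_smul_left, real_inner_smul_right, hss, mul_zero, mul_zero]

/-- The key supporting direction lemma: for `x ∈ stdSix` and unit `z ⊥ x`, the
vector `u = (√2)⁻¹ • (x + z)` is a unit vector supporting `K₀` at value 1. -/
lemma good_u {x z : E3} (hx : x ∈ stdSix) (hz1 : ‖z‖ = 1) (hzx : ⟪x, z⟫ = 0) :
    ‖(Real.sqrt 2)⁻¹ • (x + z)‖ = 1 ∧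
    (∀ y ∈ stdSix, Real.sqrt 2 * ⟪y, (Real.sqrt 2)⁻¹ • (x + z)⟫ ≤ 1) ∧
    ⟪x, (Real.sqrt 2)⁻¹ • (x + z)⟫ = (Real.sqrt 2)⁻¹ := by
  have hx1 : ‖x‖ = 1 := stdSix_norm hx
  have hs2 : (0:ℝ) < Real.sqrt 2 := Real.sqrt_pos.2 (by norm_num)
  have hxz2 : ‖x + z‖ ^ 2 = 2 := by
    rw [norm_add_sq_real, hx1, hz1, hzx]; norm_num
  refine ⟨?_, ?_, ?_⟩
  · rw [norm_smul, Real.norm_eq_abs, abs_of_nonneg (inv_nonneg.2 hs2.le)]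
    have hxz : ‖x + z‖ = Real.sqrt 2 := by
      rw [show (2:ℝ) = ‖x + z‖ ^ 2 from hxz2.symm, Real.sqrt_sq (norm_nonneg _)]
    rw [hxz, inv_mul_cancel₀ hs2.ne']
  · intro y hy
    rw [real_inner_smul_right, ← mul_assoc, mul_inv_cancel₀ hs2.ne', one_mul,
      inner_add_right]
    have hcs : ⟪y, z⟫ ≤ 1 := by
      calc ⟪y, z⟫ ≤ ‖y‖ * ‖z‖ := real_inner_le_norm _ _
        _ = 1 := by rw [stdSix_norm hy, hz1, mul_one]
    rcases stdSix_inner_cases hx hy with h | h | h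
    · rw [h, real_inner_self_eq_norm_sq, hx1, hzx]
      norm_num
    · rw [h, inner_neg_left, inner_neg_left, real_inner_self_eq_norm_sq, hx1, hzx]
      norm_num
    · rw [h]
      linarith
  · rw [real_inner_smul_right, inner_add_right, real_inner_self_eq_norm_sq, hx1, hzx]
    norm_num

/-- Each vertex `√2 • x` is a boundary point of `K₀`. -/
lemma vertex_mem_frontier {x : E3} (hx : x ∈ stdSix) :
    Real.sqrt 2 • x ∈ frontier K₀ := by
  have hs2 : (0:ℝ) < Real.sqrt 2 := Real.sqrt_pos.2 (by norm_num)
  have hmem : Real.sqrt 2 • x ∈ K₀ :=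
    Set.mem_biUnion hx (subset_convexHull ℝ _ (Set.mem_union_left _ rfl))
  obtain ⟨z, hzS, hzx⟩ := exists_orth hx
  obtain ⟨hu1, hvert, hxu⟩ := good_u hx (stdSix_norm hzS) hzx
  have hnotint : Real.sqrt 2 • x ∉ interior K₀ := by
    apply not_mem_interior_of _ _ hu1.le hvert
    rw [real_inner_smul_left, hxu, mul_inv_cancel₀ hs2.ne']
  exact ⟨subset_closure hmem, hnotint⟩

/-- If a unit vector `w` illuminates the vertex `√2 • x`, then `√2⟪x,w⟫ < -1`. -/
lemma illum_dir {x : E3} (w : E3) (hx : x ∈ stdSix) (hw : ‖w‖ = 1) (t : ℝ)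
    (ht : 0 < t) (hint : Real.sqrt 2 • x + t • w ∈ interior K₀) :
    Real.sqrt 2 * ⟪x, w⟫ < -1 := by
  by_contra hcon
  push_neg at hcon
  set c : ℝ := ⟪x, w⟫ with hc
  have hx1 : ‖x‖ = 1 := stdSix_norm hx
  have hs2 : (0:ℝ) < Real.sqrt 2 := Real.sqrt_pos.2 (by norm_num)
  have hsq : Real.sqrt 2 * Real.sqrt 2 = 2 := Real.mul_self_sqrt (by norm_num)
  obtain ⟨z, hz1, hzx, hzw⟩ :
      ∃ z : E3, ‖z‖ = 1 ∧ ⟪x, z⟫ = 0 ∧ 0 ≤ c + ⟪w, z⟫ := by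
    by_cases hw' : w - c • x = 0
    · obtain ⟨z, hzS, hxz⟩ := exists_orth hx
      have hwx : w = c • x := by rwa [sub_eq_zero] at hw'
      have hwz : ⟪w, z⟫ = c * ⟪x, z⟫ := by rw [hwx, real_inner_smul_left]
      have habs : |c| = 1 := by
        have := hw
        rw [hwx, norm_smul, hx1, mul_one, Real.norm_eq_abs] at this
        exact this
      have hc1 : c = 1 := by
        rcases abs_eq (by norm_num : (0:ℝ) ≤ 1) |>.1 habs with h | h
        · exact h
        · exfalso; rw [h] at hcon; nlinarith
      refine ⟨z, stdSix_norm hzS, hxz, ?_⟩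
      rw [hwz, hxz, mul_zero, add_zero, hc1]
      norm_num
    · set w' := w - c • x with hw'def
      have hxw' : ⟪x, w'⟫ = 0 := by
        rw [hw'def, inner_sub_right, real_inner_smul_right,
          real_inner_self_eq_norm_sq, hx1]
        simp [hc]
      have hwx : ⟪w, x⟫ = c := by rw [hc, real_inner_comm]
      have hww' : ⟪w, w'⟫ = 1 - c ^ 2 := by
        rw [hw'def, inner_sub_right, real_inner_smul_right, hwx,
          real_inner_self_eq_norm_sq, hw]
        ring
      have hnw' : ‖w'‖ ^ 2 = 1 - c ^ 2 := by
        rw [hw'def, norm_sub_sq_real, norm_smul, real_inner_smul_right, hwx, hw,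
          Real.norm_eq_abs, hx1]
        have : (|c| * 1) ^ 2 = c ^ 2 := by rw [mul_one, sq_abs]
        rw [this]; ring
      have hpos : 0 < ‖w'‖ := norm_pos_iff.2 hw'
      refine ⟨‖w'‖⁻¹ • w', ?_, ?_, ?_⟩
      · rw [norm_smul, Real.norm_eq_abs, abs_of_nonneg (inv_nonneg.2 hpos.le),
          inv_mul_cancel₀ hpos.ne']
      · rw [real_inner_smul_right, hxw', mul_zero]
      · rw [real_inner_smul_right, hww']
        have h1c : ‖w'‖⁻¹ * (1 - c ^ 2) = ‖w'‖ := by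
          rw [← hnw', pow_two]
          field_simp
        rw [h1c]
        by_cases hc0 : 0 ≤ c
        · linarith [hpos.le]
        · push_neg at hc0
          by_contra hcontra
          push_neg at hcontra
          have h1 : ‖w'‖ < -c := by linarith
          have h2 : ‖w'‖ ^ 2 < c ^ 2 := by nlinarith [hpos.le]
          have h3 : 1 < 2 * c ^ 2 := by nlinarith [hnw']
          have h4 : 0 ≤ Real.sqrt 2 * c + 1 := by linarith
          have h5 : 0 < -(Real.sqrt 2 * c) := by nlinarith [mul_pos hs2 (neg_pos.2 hc0)]
          nlinarith [mul_nonneg h4 h5.le, hsq]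
  obtain ⟨hu1, hvert, hxu⟩ := good_u hx hz1 hzx
  set u : E3 := (Real.sqrt 2)⁻¹ • (x + z) with hu
  have hq : (1:ℝ) ≤ ⟪Real.sqrt 2 • x + t • w, u⟫ := by
    rw [inner_add_left, real_inner_smul_left, real_inner_smul_left, hxu,
      mul_inv_cancel₀ hs2.ne']
    have hwu : 0 ≤ ⟪w, u⟫ := by
      rw [hu, real_inner_smul_right, inner_add_right]
      have hwx : ⟪w, x⟫ = c := by rw [hc, real_inner_comm]
      rw [hwx]
      exact mul_nonneg (inv_nonneg.2 hs2.le) hzw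
    nlinarith [mul_nonneg ht.le hwu]
  exact not_mem_interior_of u _ hu1.le hvert hq hint

/-- The same unit vector cannot illuminate two distinct vertices. -/
lemma no_two {x y : E3} (w : E3) (hx : x ∈ stdSix) (hy : y ∈ stdSix)
    (hw : ‖w‖ = 1) (h1 : Real.sqrt 2 * ⟪x, w⟫ < -1)
    (h2 : Real.sqrt 2 * ⟪y, w⟫ < -1) : x = y := by
  have hsq : Real.sqrt 2 * Real.sqrt 2 = 2 := Real.mul_self_sqrt (by norm_num)
  have hsum : ∑ k : Fin 3, (w k) ^ 2 = 1 := by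
    have h := real_inner_self_eq_norm_sq w
    rw [hw] at h
    rw [PiLp.inner_apply] at h
    simp only [RCLike.inner_apply, conj_trivial] at h
    calc ∑ k : Fin 3, (w k) ^ 2 = ∑ k : Fin 3, w k * w k := by
          apply Finset.sum_congr rfl; intro k _; ring
      _ = 1 := by rw [h]; norm_num
  obtain ⟨i, σ, hσ, rfl⟩ := stdSix_repr hx
  obtain ⟨j, τ, hτ, rfl⟩ := stdSix_repr hy
  have hxi : ⟪(σ • EuclideanSpace.single i 1 : E3), w⟫ = σ * w i := by
    rw [real_inner_smul_left, EuclideanSpace.inner_single_left]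
    simp
  have hyi : ⟪(τ • EuclideanSpace.single j 1 : E3), w⟫ = τ * w j := by
    rw [real_inner_smul_left, EuclideanSpace.inner_single_left]
    simp
  rw [hxi] at h1
  rw [hyi] at h2
  have hσ2 : σ ^ 2 = 1 := by rcases hσ with rfl | rfl <;> norm_num
  have hτ2 : τ ^ 2 = 1 := by rcases hτ with rfl | rfl <;> norm_num
  have key : ∀ a : ℝ, Real.sqrt 2 * a < -1 → 1 / 2 < a ^ 2 := by
    intro a h
    have h' : 1 < -(Real.sqrt 2 * a) := by linarith
    have hb : 1 < -(Real.sqrt 2 * a) * -(Real.sqrt 2 * a) := by nlinarith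
    nlinarith [hsq, hb, sq_nonneg a]
  have hwi : 1 / 2 < (w i) ^ 2 := by
    have h := key _ h1
    have hrw : (σ * w i) ^ 2 = (w i) ^ 2 := by rw [mul_pow, hσ2, one_mul]
    linarith [hrw ▸ h]
  have hwj : 1 / 2 < (w j) ^ 2 := by
    have h := key _ h2
    have hrw : (τ * w j) ^ 2 = (w j) ^ 2 := by rw [mul_pow, hτ2, one_mul]
    linarith [hrw ▸ h]
  have hij : i = j := by
    by_contra hij
    have hpair : (w i) ^ 2 + (w j) ^ 2 ≤ 1 := by
      have hsub : ({i, j} : Finset (Fin 3)) ⊆ Finset.univ := Finset.subset_univ _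
      have := Finset.sum_le_sum_of_subset_of_nonneg hsub
        (fun k _ _ => sq_nonneg (w k))
      rw [Finset.sum_pair hij] at this
      linarith [hsum ▸ this]
    linarith
  subst hij
  have hστ : σ = τ := by
    rcases hσ with rfl | rfl <;> rcases hτ with rfl | rfl
    · rfl
    · exfalso; nlinarith
    · exfalso; nlinarith
    · rfl
  rw [hστ]

/-- The finset of the six directions. -/
def sFin : Finset E3 :=
  letI := Classical.decEq E3
  {EuclideanSpace.single 0 1, EuclideanSpace.single 0 (-1),
   EuclideanSpace.single 1 1, EuclideanSpace.single 1 (-1),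
   EuclideanSpace.single 2 1, EuclideanSpace.single 2 (-1)}

lemma single_ne (i j : Fin 3) (a b : ℝ) (ha : a ≠ 0) (h : i ≠ j ∨ a ≠ b) :
    (EuclideanSpace.single i a : E3) ≠ EuclideanSpace.single j b := by
  intro he
  have hi : (EuclideanSpace.single i a : E3) i = (EuclideanSpace.single j b : E3) i := by
    rw [he]
  rw [EuclideanSpace.single_apply, EuclideanSpace.single_apply, if_pos rfl] at hi
  by_cases hij : i = j
  · rw [if_pos hij] at hi
    rcases h with h | h
    · exact h hij
    · exact h hi
  · rw [if_neg hij] at hi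
    exact ha hi

lemma sFin_mem (x : E3) : x ∈ sFin ↔ x ∈ stdSix := by
  have h0 : (-(EuclideanSpace.single 0 1) : E3) = EuclideanSpace.single 0 (-1) :=
    neg_single 0 1
  have h1 : (-(EuclideanSpace.single 1 1) : E3) = EuclideanSpace.single 1 (-1) :=
    neg_single 1 1
  have h2 : (-(EuclideanSpace.single 2 1) : E3) = EuclideanSpace.single 2 (-1) :=
    neg_single 2 1
  simp only [sFin, stdSix, Finset.mem_insert, Finset.mem_singleton,
    Set.mem_insert_iff, Set.mem_singleton_iff, h0, h1, h2]

lemma sFin_card : sFin.card = 6 := by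
  classical
  have key : ∀ (i j : Fin 3) (a b : ℝ), a ≠ 0 → (i ≠ j ∨ a ≠ b) →
      (EuclideanSpace.single i a : E3) ≠ EuclideanSpace.single j b := single_ne
  rw [show sFin =
    letI := Classical.decEq E3
    {EuclideanSpace.single 0 1, EuclideanSpace.single 0 (-1),
     EuclideanSpace.single 1 1, EuclideanSpace.single 1 (-1),
     EuclideanSpace.single 2 1, EuclideanSpace.single 2 (-1)} from rfl]
  letI : DecidableEq E3 := Classical.decEq E3
  rw [Finset.card_insert_of_notMem, Finset.card_insert_of_notMem,
    Finset.card_insert_of_notMem, Finset.card_insert_of_notMem,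
    Finset.card_insert_of_notMem, Finset.card_singleton]
  · simp only [Finset.mem_singleton]
    exact key _ _ _ _ (by norm_num) (Or.inr (by norm_num))
  · simp only [Finset.mem_insert, Finset.mem_singleton, not_or]
    refine ⟨?_, ?_⟩ <;>
      exact key _ _ _ _ (by norm_num) (Or.inl (by decide))
  · simp only [Finset.mem_insert, Finset.mem_singleton, not_or]
    refine ⟨?_, ?_, ?_⟩
    · exact key _ _ _ _ (by norm_num) (Or.inr (by norm_num))
    · exact key _ _ _ _ (by norm_num) (Or.inl (by decide))
    · exact key _ _ _ _ (by norm_num) (Or.inl (by decide))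
  · simp only [Finset.mem_insert, Finset.mem_singleton, not_or]
    refine ⟨?_, ?_, ?_, ?_⟩ <;>
      exact key _ _ _ _ (by norm_num) (by first
        | exact Or.inl (by decide)
        | exact Or.inr (by norm_num))
  · simp only [Finset.mem_insert, Finset.mem_singleton, not_or]
    refine ⟨?_, ?_, ?_, ?_, ?_⟩ <;>
      exact key _ _ _ _ (by norm_num) (by first
        | exact Or.inl (by decide)
        | exact Or.inr (by norm_num))

/-- The six directions illuminate every boundary point of `K₀`. -/
lemma illum_six : ∀ p ∈ frontier K₀,
    ∃ v ∈ sFin, ∃ t : ℝ, 0 < t ∧ p + t • v ∈ interior K₀ := by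
  intro p hp
  have hpK : p ∈ K₀ := by
    have h := hp.1
    rwa [isClosed_K₀.closure_eq] at h
  have hpnotint : p ∉ interior K₀ := hp.2
  rw [K₀, mem_iUnion₂] at hpK
  obtain ⟨x, hx, hpx⟩ := hpK
  obtain ⟨s, hs0, hs1, hs⟩ := (mem_cap_iff _ _).1 hpx
  rcases eq_or_lt_of_le hs1 with rfl | hslt
  · -- p is the vertex √2 • x
    have hp_eq : p = Real.sqrt 2 • x := by
      have h0 : ‖p - (1:ℝ) • (Real.sqrt 2 • x)‖ ≤ 0 := by simpa using hs
      have := norm_le_zero_iff.mp h0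
      rwa [one_smul, sub_eq_zero] at this
    have hs2 : (0:ℝ) < Real.sqrt 2 := Real.sqrt_pos.2 (by norm_num)
    refine ⟨-x, (sFin_mem _).2 (stdSix_neg_mem hx), Real.sqrt 2 / 2,
      by positivity, ?_⟩
    apply mem_interior_of_ball x hx (1/2) (by norm_num) (by norm_num)
    have hzero : p + (Real.sqrt 2 / 2) • (-x) - (1/2 : ℝ) • (Real.sqrt 2 • x)
        = 0 := by
      rw [hp_eq]; module
    rw [hzero, norm_zero]
    norm_num
  · -- p is on a lateral or spherical part at level `s < 1`
    set d : E3 := p - s • (Real.sqrt 2 • x) with hd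
    have hdne : d ≠ 0 := by
      intro h0
      apply hpnotint
      apply mem_interior_of_ball x hx s hs0 hslt
      rw [← hd, h0, norm_zero]
      linarith
    obtain ⟨i, hi⟩ : ∃ i : Fin 3, d i ≠ 0 := by
      by_contra hno
      push_neg at hno
      exact hdne (by ext k; simpa using hno k)
    classical
    set w : E3 := if 0 < d i then EuclideanSpace.single i (-1)
      else EuclideanSpace.single i 1 with hwdef
    have hwS : w ∈ stdSix := by
      rw [hwdef]
      split_ifs
      · rw [← neg_single]
        exact stdSix_neg_mem (single_mem_stdSix i)
      · exact single_mem_stdSix i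
    have hdw : ⟪d, w⟫ = -|d i| := by
      rw [hwdef]
      split_ifs with h
      · rw [real_inner_comm, EuclideanSpace.inner_single_left]
        simp [abs_of_pos h]
      · push_neg at h
        have hneg : d i < 0 := lt_of_le_of_ne h hi
        rw [real_inner_comm, EuclideanSpace.inner_single_left]
        simp [abs_of_neg hneg]
    refine ⟨w, (sFin_mem _).2 hwS, |d i|, abs_pos.2 hi, ?_⟩
    apply mem_interior_of_ball x hx s hs0 hslt
    have harr : p + |d i| • w - s • (Real.sqrt 2 • x) = d + |d i| • w := by
      rw [hd]; abel
    rw [harr]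
    have hwnorm : ‖w‖ = 1 := stdSix_norm hwS
    have hexp : ‖d + |d i| • w‖ ^ 2 = ‖d‖ ^ 2 - |d i| ^ 2 := by
      rw [norm_add_sq_real, real_inner_smul_right, hdw, norm_smul, hwnorm,
        Real.norm_eq_abs, abs_abs]
      ring
    have hd_le : ‖d‖ ≤ 1 - s := by rw [hd]; exact hs
    have h1s : (0:ℝ) < 1 - s := by linarith
    have hlt : ‖d + |d i| • w‖ ^ 2 < (1 - s) ^ 2 := by
      rw [hexp]
      have hpos : 0 < |d i| := abs_pos.2 hi
      nlinarith [norm_nonneg d]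
    exact lt_of_pow_lt_pow_left₀ 2 h1s.le hlt

/-- The illumination number of the cap body `K₀` equals 6. -/
theorem illumNum_K₀ : illumNum K₀ = 6 := by
  classical
  have hmem : 6 ∈ {n : ℕ | ∃ V : Finset (EuclideanSpace ℝ (Fin 3)), V.card = n ∧
      (∀ v ∈ V, ‖v‖ = 1) ∧
      ∀ p ∈ frontier K₀, ∃ v ∈ V, ∃ t : ℝ, 0 < t ∧ p + t • v ∈ interior K₀} :=
    ⟨sFin, sFin_card, fun v hv => stdSix_norm ((sFin_mem v).1 hv), illum_six⟩
  apply le_antisymm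
  · exact Nat.sInf_le hmem
  · apply le_csInf ⟨6, hmem⟩
    rintro n ⟨V, hcard, hunit, hillum⟩
    have key : ∀ x ∈ sFin, ∃ w ∈ V, Real.sqrt 2 * ⟪x, w⟫ < -1 := by
      intro x hxF
      have hx := (sFin_mem x).1 hxF
      obtain ⟨w, hwV, t, ht, hint⟩ :=
        hillum (Real.sqrt 2 • x) (vertex_mem_frontier hx)
      exact ⟨w, hwV, illum_dir w hx (hunit w hwV) t ht hint⟩
    set f : E3 → E3 := fun x =>
      if h : ∃ w ∈ V, Real.sqrt 2 * ⟪x, w⟫ < -1 then h.choose else 0 with hf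
    have hfmem : ∀ x ∈ sFin, f x ∈ V := by
      intro x hx
      have h := key x hx
      rw [hf]
      simp only [dif_pos h]
      exact h.choose_spec.1
    have hfspec : ∀ x ∈ sFin, Real.sqrt 2 * ⟪x, f x⟫ < -1 := by
      intro x hx
      have h := key x hx
      rw [hf]
      simp only [dif_pos h]
      exact h.choose_spec.2
    have hinj : Set.InjOn f sFin := by
      intro x hx y hy hxy
      have h2 : Real.sqrt 2 * ⟪y, f x⟫ < -1 := by
        rw [hxy]; exact hfspec y hy
      exact no_two (f x) ((sFin_mem x).1 hx) ((sFin_mem y).1 hy)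
        (hunit _ (hfmem x hx)) (hfspec x hx) h2
    calc 6 = sFin.card := sFin_card.symm
      _ ≤ V.card := Finset.card_le_card_of_injOn f hfmem hinj
      _ = n := hcard

end
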